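/- Let A be an associative unital ℂ-algebra, m ∈ ℂ, and let a, b, c, d ∈ A satisfy the Jordanian GL_m(2) relations. Set δ = a·d − b·c + m·a·c. Then the 2×2 matrices T = [[a, b], [c, d]] and S = [[d + m·c, −b + m·(d − a) + m²·c], [−c, a − m·c]] satisfy S * T = T * S = δ·I₂ (where δ·I₂ is the 2×2 scalar matrix with δ on the diagonal). -/
import Mathlib


noncomputable section

open Matrix

/-- The defining relations of the Jordanian quantum group `GL_m(2)` for elements
`a, b, c, d` of a unital associative `ℂ`-algebra `A`, with `δ = a·d − b·c + m·a·c`. -/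
def GLm2Relations {A : Type*} [Ring A] [Algebra ℂ A] (m : ℂ) (a b c d : A) : Prop :=
  c * d - d * c = (-m) • (c * c) ∧
  c * b - b * c = (-m) • (a * c + c * d) ∧
  c * a - a * c = (-m) • (c * c) ∧
  d * a - a * d = (-m) • ((d - a) * c) ∧
  d * b - b * d = (-m) • (d * d - (a * d - b * c + m • (a * c))) ∧
  b * a - a * b = (-m) • ((a * d - b * c + m • (a * c)) - a * a)

/-- the antipode matrix `S` of the Jordanian `GL_m(2)` satisfies
`S·T = T·S = δ·I₂`, where `δ = a·d − b·c + m·a·c` is the quantum determinant. -/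
theorem GLm2_antipode_matrix (A : Type*) [Ring A] [Algebra ℂ A] (m : ℂ)
    (a b c d : A) (h : GLm2Relations m a b c d) :
    (!![d + m • c, -b + m • (d - a) + (m ^ 2) • c; -c, a - m • c] * !![a, b; c, d] =
        (a * d - b * c + m • (a * c)) • (1 : Matrix (Fin 2) (Fin 2) A)) ∧
    (!![a, b; c, d] * !![d + m • c, -b + m • (d - a) + (m ^ 2) • c; -c, a - m • c] =
        (a * d - b * c + m • (a * c)) • (1 : Matrix (Fin 2) (Fin 2) A)) := by
  obtain ⟨h1, h2, h3, h4, h5, h6⟩ := h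
  have e1 : d * c = c * d + m • (c * c) := by
    rw [sub_eq_iff_eq_add] at h1; rw [h1]; module
  have e2 : c * b = b * c - m • (a * c + c * d) := by
    rw [sub_eq_iff_eq_add] at h2; rw [h2]; module
  have e3 : c * a = a * c - m • (c * c) := by
    rw [sub_eq_iff_eq_add] at h3; rw [h3]; module
  have e4 : d * a = a * d - m • ((d - a) * c) := by
    rw [sub_eq_iff_eq_add] at h4; rw [h4]; module
  have e5 : d * b = b * d - m • (d * d - (a * d - b * c + m • (a * c))) := by
    rw [sub_eq_iff_eq_add] at h5; rw [h5]; module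
  have e6 : b * a = a * b - m • ((a * d - b * c + m • (a * c)) - a * a) := by
    rw [sub_eq_iff_eq_add] at h6; rw [h6]; module
  constructor <;> ext i j <;> fin_cases i <;> fin_cases j <;>
      simp [Matrix.mul_apply, Fin.sum_univ_two, Matrix.one_apply] <;>
    · simp only [add_mul, sub_mul, neg_mul, smul_mul_assoc, mul_add, mul_sub, mul_neg,
        mul_smul_comm, smul_sub, smul_add, smul_smul, e1, e2, e3, e4, e5, e6]
      module
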